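/- arXiv:2401.02302 — 2 statements merged into one kernel-verified Lean document; each statement's English description precedes it below -/
import Mathlib

section
/- There exists an ultrafilter F on ℕ that contains every nonempty upward closed subset of ℕ; moreover, an ultrafilter F contains every nonempty upward closed subset of ℕ if and only if G ∣~ F holds for every ultrafilter G on ℕ. In particular the class MAX = {F ∈ βℕ : ∀G ∈ βℕ, G ∣~ F} is nonempty. -/
/-- Upward closure under divisibility: `A↑ = {n : ∃ a ∈ A, a ∣ n}`. -/
def upcl (A : Set ℕ+) : Set ℕ+ := {n | ∃ a ∈ A, a ∣ n}

/-- `F ∣~ G` iff `A↑ ∈ G` for every `A ∈ F`. -/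
def udvd (F G : Ultrafilter ℕ+) : Prop := ∀ A ∈ F, upcl A ∈ G

lemma subset_upcl (A : Set ℕ+) : A ⊆ upcl A := fun a ha => ⟨a, ha, dvd_refl a⟩

lemma upcl_idem (A : Set ℕ+) : upcl (upcl A) = upcl A := by
  apply Set.Subset.antisymm
  · rintro n ⟨b, ⟨a, ha, hab⟩, hbn⟩
    exact ⟨a, ha, hab.trans hbn⟩
  · exact subset_upcl _

/-- The set of nonempty upward-closed sets. -/
def goodSets : Set (Set ℕ+) := {A | upcl A = A ∧ A.Nonempty}

lemma inter_good {A B : Set ℕ+} (hA : A ∈ goodSets) (hB : B ∈ goodSets) :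
    A ∩ B ∈ goodSets := by
  obtain ⟨hAu, a, ha⟩ := hA
  obtain ⟨hBu, b, hb⟩ := hB
  constructor
  · apply Set.Subset.antisymm
    · rintro n ⟨c, ⟨hcA, hcB⟩, hcn⟩
      exact ⟨hAu ▸ ⟨c, hcA, hcn⟩, hBu ▸ ⟨c, hcB, hcn⟩⟩
    · exact subset_upcl _
  · exact ⟨a * b, hAu ▸ ⟨a, ha, Dvd.intro b rfl⟩, hBu ▸ ⟨b, hb, Dvd.intro_left a rfl⟩⟩

lemma sInter_good {t : Set (Set ℕ+)} (ht : t.Finite) (hts : t ⊆ goodSets) :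
    ⋂₀ t ∈ goodSets := by
  refine Set.Finite.induction_on (motive := fun t _ => t ⊆ goodSets → ⋂₀ t ∈ goodSets) t ht ?_ ?_ hts
  · intro _
    simp only [Set.sInter_empty]
    refine ⟨?_, Set.univ_nonempty⟩
    exact Set.Subset.antisymm (fun _ _ => trivial) (subset_upcl _)
  · intro A t _ _ ih hts
    rw [Set.sInter_insert]
    exact inter_good (hts (Set.mem_insert _ _))
      (ih (fun B hB => hts (Set.mem_insert_of_mem _ hB)))

theorem stmt1 :
    (∃ F : Ultrafilter ℕ+, ∀ A : Set ℕ+, upcl A = A → A.Nonempty → A ∈ F) ∧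
    (∀ F : Ultrafilter ℕ+,
      (∀ A : Set ℕ+, upcl A = A → A.Nonempty → A ∈ F) ↔
        ∀ G : Ultrafilter ℕ+, udvd G F) := by
  constructor
  · have hne : Filter.NeBot (Filter.generate goodSets) := by
      rw [Filter.generate_neBot_iff]
      exact fun t hts ht => (sInter_good ht hts).2
    obtain ⟨F, hF⟩ := Ultrafilter.exists_le (Filter.generate goodSets)
    exact ⟨F, fun A h1 h2 => hF (Filter.mem_generate_of_mem ⟨h1, h2⟩)⟩
  · intro F
    constructor
    · intro hF G A hA
      exact hF (upcl A) (upcl_idem A) ((G.nonempty_of_mem hA).mono (subset_upcl A))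
    · intro h A hup hne
      obtain ⟨a, ha⟩ := hne
      have := h (pure a) {a} (by simp)
      refine F.mem_of_superset this ?_
      rintro n ⟨b, hb, hbn⟩
      rw [Set.mem_singleton_iff] at hb
      exact hup ▸ ⟨a, hup ▸ ha, hb ▸ hbn⟩
end

section
/- If F is an ultrafilter on ℕ with L_n ∈ F for some n ∈ ω, then the =~-equivalence class of F is a singleton: every ultrafilter G with G =~ F (i.e. G ∣~ F and F ∣~ G) satisfies G = F. -/
/-- `L_n`: the positive integers which are products of exactly `n` primes
(counted with multiplicity). -/
def levelSet (n : ℕ) : Set ℕ+ :=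
  { x | ∃ l : List ℕ+, l.length = n ∧ (∀ p ∈ l, (p : ℕ).Prime) ∧ l.prod = x }

/-- Number of prime factors with multiplicity. -/
def bigOmega (x : ℕ+) : ℕ := ((x : ℕ).primeFactorsList).length

lemma pnat_list_prod_coe : ∀ l : List ℕ+, ((l.prod : ℕ+) : ℕ) = (l.map (fun p : ℕ+ => (p : ℕ))).prod := by
  intro l
  induction l with
  | nil => simp
  | cons a t ih => simp [ih]

lemma mem_levelSet_iff (n : ℕ) (x : ℕ+) : x ∈ levelSet n ↔ bigOmega x = n := by
  constructor
  · rintro ⟨l, hlen, hp, hprod⟩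
    have hmap : ((l.map (fun p : ℕ+ => (p : ℕ))).prod : ℕ) = (x : ℕ) := by
      rw [← hprod, pnat_list_prod_coe]
    have hperm := Nat.primeFactorsList_unique hmap
      (fun p hp' => by
        obtain ⟨q, hq, rfl⟩ := List.mem_map.mp hp'
        exact hp q hq)
    have := hperm.length_eq
    simp only [List.length_map] at this
    rw [bigOmega, ← this, hlen]
  · intro h
    refine ⟨(x : ℕ).primeFactorsList.pmap
      (fun p hp => (⟨p, hp.pos⟩ : ℕ+))
      (fun p hp => Nat.prime_of_mem_primeFactorsList hp), ?_, ?_, ?_⟩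
    · erw [List.length_pmap]
      exact h
    · intro p hp
      obtain ⟨q, hq, hpq⟩ := List.mem_pmap.mp hp
      have : (p : ℕ) = q := by rw [← hpq]; rfl
      rw [this]

      exact Nat.prime_of_mem_primeFactorsList hq
    · apply PNat.coe_injective
      rw [pnat_list_prod_coe]
      erw [List.map_pmap]
      simp only [PNat.mk_coe, List.pmap_eq_map, List.map_id']
      exact Nat.prod_primeFactorsList x.ne_zero

lemma bigOmega_le_of_dvd {a x : ℕ+} (h : a ∣ x) : bigOmega a ≤ bigOmega x := by
  obtain ⟨c, rfl⟩ := h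
  have : ((a * c : ℕ+) : ℕ) = (a : ℕ) * (c : ℕ) := by simp
  rw [bigOmega, bigOmega, this,
    (Nat.perm_primeFactorsList_mul a.ne_zero c.ne_zero).length_eq, List.length_append]
  omega

lemma eq_of_dvd_levelSet {n : ℕ} {a x : ℕ+} (ha : a ∈ levelSet n) (hx : x ∈ levelSet n)
    (h : a ∣ x) : a = x := by
  obtain ⟨c, rfl⟩ := h
  rw [mem_levelSet_iff] at ha hx
  have hc : bigOmega c = 0 := by
    have : ((a * c : ℕ+) : ℕ) = (a : ℕ) * (c : ℕ) := by simp
    rw [bigOmega, this, (Nat.perm_primeFactorsList_mul a.ne_zero c.ne_zero).length_eq,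
      List.length_append] at hx
    rw [bigOmega] at ha ⊢
    omega
  have : (c : ℕ).primeFactorsList = [] := List.length_eq_zero_iff.mp hc
  have hc1 : (c : ℕ) = 1 := by
    rcases (Nat.primeFactorsList_eq_nil _).mp this with h0 | h1
    · exact absurd h0 c.ne_zero
    · exact h1
  have : c = 1 := PNat.coe_injective hc1
  rw [this, mul_one]

theorem stmt10 (F : Ultrafilter ℕ+) (n : ℕ) (hF : levelSet n ∈ F) :
    ∀ G : Ultrafilter ℕ+, udvd G F → udvd F G → G = F := by
  intro G hGF hFG
  -- Step 1: levelSet n ∈ G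
  have hup : upcl (levelSet n) ∈ G := hFG _ hF
  have hB : {x : ℕ+ | bigOmega x ≤ n} ∈ G := by
    by_contra hc
    have hcompl : {x : ℕ+ | bigOmega x ≤ n}ᶜ ∈ G := (Ultrafilter.compl_mem_iff_notMem).mpr hc
    have hupc : upcl ({x : ℕ+ | bigOmega x ≤ n}ᶜ) ∈ F := hGF _ hcompl
    have hempty : upcl ({x : ℕ+ | bigOmega x ≤ n}ᶜ) ∩ levelSet n ∈ F :=
      Filter.inter_mem hupc hF
    obtain ⟨x, ⟨⟨a, ha, hax⟩, hxL⟩⟩ := Filter.nonempty_of_mem hempty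
    have h1 : bigOmega x = n := (mem_levelSet_iff n x).mp hxL
    have h2 : n < bigOmega a := Nat.lt_of_not_le ha
    have h3 := bigOmega_le_of_dvd hax
    omega
  have hGL : levelSet n ∈ G := by
    refine Filter.mem_of_superset (Filter.inter_mem hup hB) ?_
    rintro x ⟨⟨a, ha, hax⟩, hx⟩
    rw [mem_levelSet_iff]
    have h1 := (mem_levelSet_iff n a).mp ha
    have h2 := bigOmega_le_of_dvd hax
    have h3 : bigOmega x ≤ n := hx
    omega
  -- Step 2: every member of G is in F
  have key : ∀ A ∈ G, A ∈ F := by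
    intro A hA
    have hAL : A ∩ levelSet n ∈ G := Filter.inter_mem hA hGL
    have hupA : upcl (A ∩ levelSet n) ∈ F := hGF _ hAL
    refine Filter.mem_of_superset (Filter.inter_mem hupA hF) ?_
    rintro x ⟨⟨a, ⟨haA, haL⟩, hax⟩, hxL⟩
    have : a = x := eq_of_dvd_levelSet haL hxL hax
    rwa [← this]
  have hle : (F : Filter ℕ+) ≤ (G : Filter ℕ+) := fun s hs => key s hs
  exact (Ultrafilter.coe_injective (G.unique hle)).symm
end
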